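/- ODE comparison for the potential: if v : (0,∞) → ℝ is C¹ and satisfies |r v′(r) + 2 v(r)| ≤ 1 + r² for all r > 0, then there exists a constant c₀ > 0 such that |v(r)| ≤ r²/4 + 1/2 + c₀/r² for all r > 0. -/

import Mathlib

open Real

lemma mono_aux (v : ℝ → ℝ)
    (hv : ∀ r : ℝ, 0 < r → DifferentiableAt ℝ v r)
    (h : ∀ r : ℝ, 0 < r → -(1 + r ^ 2) ≤ r * deriv v r + 2 * v r) :
    MonotoneOn (fun s => s ^ 2 / 2 + s ^ 4 / 4 + s ^ 2 * v s) (Set.Ioi 0) := by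
  have hd : ∀ r : ℝ, 0 < r →
      HasDerivAt (fun s => s ^ 2 / 2 + s ^ 4 / 4 + s ^ 2 * v s)
        (r + r ^ 3 + (2 * r * v r + r ^ 2 * deriv v r)) r := by
    intro r hr
    have h1 : HasDerivAt (fun s : ℝ => s ^ 2 * v s)
        (2 * r * v r + r ^ 2 * deriv v r) r := by
      have := (hasDerivAt_pow 2 r).fun_mul (hv r hr).hasDerivAt
      refine this.congr_deriv ?_
      ring
    have h2 : HasDerivAt (fun s : ℝ => s ^ 2 / 2 + s ^ 4 / 4) (r + r ^ 3) r := by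
      have := ((hasDerivAt_pow 2 r).div_const 2).fun_add ((hasDerivAt_pow 4 r).div_const 4)
      refine this.congr_deriv ?_
      ring
    exact h2.add h1
  apply monotoneOn_of_deriv_nonneg (convex_Ioi 0)
  · intro x hx
    exact ((hd x hx).continuousAt).continuousWithinAt
  · intro x hx
    rw [interior_Ioi] at hx
    exact ((hd x hx).differentiableAt).differentiableWithinAt
  · intro x hx
    rw [interior_Ioi] at hx
    rw [(hd x hx).deriv]
    have := h x hx
    have hm := mul_le_mul_of_nonneg_left this (le_of_lt hx)
    nlinarith [hm]

theorem ode_comparison_potential (v : ℝ → ℝ)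
    (hv : ∀ r : ℝ, 0 < r → DifferentiableAt ℝ v r)
    (hineq : ∀ r : ℝ, 0 < r → |r * deriv v r + 2 * v r| ≤ 1 + r ^ 2) :
    ∃ c₀ > 0, ∀ r : ℝ, 0 < r → |v r| ≤ r ^ 2 / 4 + 1 / 2 + c₀ / r ^ 2 := by
  have mP : MonotoneOn (fun s => s ^ 2 / 2 + s ^ 4 / 4 + s ^ 2 * v s) (Set.Ioi 0) := by
    apply mono_aux v hv
    intro r hr
    have := (abs_le.mp (hineq r hr)).1
    linarith
  have mN : MonotoneOn (fun s => s ^ 2 / 2 + s ^ 4 / 4 + s ^ 2 * (fun t => -v t) s)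
      (Set.Ioi 0) := by
    apply mono_aux (fun t => -v t) (fun r hr => (hv r hr).neg)
    intro r hr
    have hder : deriv (fun t => -v t) r = -deriv v r := deriv.neg
    rw [hder]
    have := (abs_le.mp (hineq r hr)).2
    linarith
  refine ⟨|v 1| + 1, by positivity, ?_⟩
  intro r hr
  have h1 : (1 : ℝ) ∈ Set.Ioi (0 : ℝ) := by norm_num
  have hrm : r ∈ Set.Ioi (0 : ℝ) := hr
  -- uniform bounds on r^2 * v r and -(r^2 * v r)
  have hub : r ^ 2 * v r ≤ r ^ 2 / 2 + r ^ 4 / 4 + 3 / 4 + |v 1| := by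
    rcases le_total r 1 with hle | hle
    · have := mP hrm h1 hle
      simp only at this
      nlinarith [abs_nonneg (v 1), neg_abs_le (v 1), le_abs_self (v 1), sq_nonneg r,
        pow_pos hr 2, pow_pos hr 4]
    · have := mN h1 hrm hle
      simp only at this
      nlinarith [neg_abs_le (v 1), le_abs_self (v 1)]
  have hlb : -(r ^ 2 * v r) ≤ r ^ 2 / 2 + r ^ 4 / 4 + 3 / 4 + |v 1| := by
    rcases le_total r 1 with hle | hle
    · have := mN hrm h1 hle
      simp only at this
      nlinarith [neg_abs_le (v 1), le_abs_self (v 1), pow_pos hr 2, pow_pos hr 4]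
    · have := mP h1 hrm hle
      simp only at this
      nlinarith [neg_abs_le (v 1), le_abs_self (v 1)]
  have hr2 : (0 : ℝ) < r ^ 2 := by positivity
  have hc : (|v 1| + 1) / r ^ 2 * r ^ 2 = |v 1| + 1 :=
    div_mul_cancel₀ _ (ne_of_gt hr2)
  rw [abs_le]
  constructor
  · nlinarith [hlb, hc, hr2]
  · nlinarith [hub, hc, hr2]
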